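/- Let k be a positive natural number, F := FreeGroup (Fin k), and let T : ℕ → Subgroup F be the 2-Frattini series: T 0 = ⊤ and, for each i, T (i+1) is the subgroup generated by {x² : x ∈ T i} ∪ {⁅x, y⁆ : x, y ∈ T i}. Then every T i has finite index in F (T i is FiniteIndex), and ⨅ i, T i = ⊥: the free group of finite rank is residually a finite 2-group. -/

import Mathlib

open scoped commutatorElement

open MonoidAlgebra

namespace FrattiniAux

variable {k : ℕ}

abbrev R (k : ℕ) := MonoidAlgebra (ZMod 2) (FreeMonoid (Fin k × Bool))

/-- good words: short and no equal adjacent letters -/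
def Good (N : ℕ) (w : FreeMonoid (Fin k × Bool)) : Prop :=
  w.length < N ∧ w.toList.IsChain (· ≠ ·)

lemma good_mul_left {N : ℕ} {u v : FreeMonoid (Fin k × Bool)} (h : Good N (u * v)) :
    Good N u := by
  obtain ⟨h1, h2⟩ := h
  rw [FreeMonoid.length_mul] at h1
  rw [FreeMonoid.toList_mul, List.isChain_append] at h2
  exact ⟨by omega, h2.1⟩

lemma good_mul_right {N : ℕ} {u v : FreeMonoid (Fin k × Bool)} (h : Good N (u * v)) :
    Good N v := by
  obtain ⟨h1, h2⟩ := h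
  rw [FreeMonoid.length_mul] at h1
  rw [FreeMonoid.toList_mul, List.isChain_append] at h2
  exact ⟨by omega, h2.2.1⟩

lemma vanish_mul_left {N : ℕ} {p q : R k} (hp : ∀ w, Good N w → p.coeff w = 0) :
    ∀ w, Good N w → (p * q).coeff w = 0 := by
  classical
  intro w hw
  by_contra h
  have hw' : w ∈ (p * q).coeff.support := Finsupp.mem_support_iff.2 h
  obtain ⟨u, hu, v, hv, rfl⟩ := Finset.mem_mul.1 (MonoidAlgebra.support_coeff_mul_subset p q hw')
  exact absurd (hp u (good_mul_left hw)) (Finsupp.mem_support_iff.1 hu)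

lemma vanish_mul_right {N : ℕ} {p q : R k} (hq : ∀ w, Good N w → q.coeff w = 0) :
    ∀ w, Good N w → (p * q).coeff w = 0 := by
  classical
  intro w hw
  by_contra h
  have hw' : w ∈ (p * q).coeff.support := Finsupp.mem_support_iff.2 h
  obtain ⟨u, hu, v, hv, rfl⟩ := Finset.mem_mul.1 (MonoidAlgebra.support_coeff_mul_subset p q hw')
  exact absurd (hq v (good_mul_right hw)) (Finsupp.mem_support_iff.1 hv)

/-- the congruence identifying everything supported on bad words with 0 -/
def bc (k N : ℕ) : RingCon (R k) where
  r f g := ∀ w, Good N w → f.coeff w = g.coeff w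
  iseqv := ⟨fun _ _ _ => rfl, fun h w hw => (h w hw).symm,
    fun h1 h2 w hw => (h1 w hw).trans (h2 w hw)⟩
  add' {a b c d} h1 h2 := fun w hw => by
    rw [MonoidAlgebra.coeff_add, MonoidAlgebra.coeff_add, Finsupp.add_apply, Finsupp.add_apply, h1 w hw, h2 w hw]
  mul' {a b c d} h1 h2 := by
    intro w hw
    have key : ∀ p q : R k, (∀ w, Good N w → p.coeff w = 0) → (∀ w, Good N w → q.coeff w = 0) →
        ∀ w, Good N w → (p + q).coeff w = 0 := fun p q hp hq w hw => by
      rw [MonoidAlgebra.coeff_add, Finsupp.add_apply, hp w hw, hq w hw, add_zero]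
    have h3 : ∀ w, Good N w → (a * (c - d) + (a - b) * d).coeff w = 0 := by
      refine key _ _ (vanish_mul_right ?_) (vanish_mul_left ?_)
      · intro w hw; rw [MonoidAlgebra.coeff_sub, Finsupp.sub_apply, h2 w hw, sub_self]
      · intro w hw; rw [MonoidAlgebra.coeff_sub, Finsupp.sub_apply, h1 w hw, sub_self]
    have h4 : a * (c - d) + (a - b) * d = a * c - b * d := by noncomm_ring
    have := h3 w hw
    rw [h4, MonoidAlgebra.coeff_sub, Finsupp.sub_apply, sub_eq_zero] at this
    exact this


abbrev A (k N : ℕ) := (bc k N).Quotient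

noncomputable def pi (k N : ℕ) : R k →+* A k N := (bc k N).mk'

lemma pi_surjective (k N : ℕ) : Function.Surjective (pi k N) :=
  fun y => Quot.inductionOn y fun r => ⟨r, rfl⟩

noncomputable def X (a : Fin k × Bool) : R k := MonoidAlgebra.single (FreeMonoid.of a) 1

lemma add_self (f : R k) : f + f = 0 := by
  ext w
  rw [MonoidAlgebra.coeff_add, Finsupp.add_apply]
  exact CharTwo.add_self_eq_zero _

lemma neg_eq' (f : R k) : -f = f := neg_eq_of_add_eq_zero_left (add_self f)

lemma pi_X_sq (N : ℕ) (a : Fin k × Bool) : pi k N (X a * X a) = 0 := by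
  have h : X a * X a = MonoidAlgebra.single (FreeMonoid.of a * FreeMonoid.of a) 1 := by
    rw [X, MonoidAlgebra.single_mul_single, one_mul]
  rw [h]
  show ((MonoidAlgebra.single (FreeMonoid.of a * FreeMonoid.of a) 1 : R k) : A k N)
      = ((0 : R k) : A k N)
  rw [RingCon.eq]
  intro w hw
  have hne : FreeMonoid.of a * FreeMonoid.of a ≠ w := by
    rintro rfl
    have := hw.2
    simp [List.isChain_cons_cons] at this
  rw [MonoidAlgebra.coeff_single, Finsupp.single_eq_of_ne' hne]
  rfl

lemma one_add_sq (x : R k) : (1 + x) * (1 + x) = 1 + x * x := by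
  have h : (1 + x) * (1 + x) = 1 + ((x + x) + x * x) := by noncomm_ring
  rw [h, add_self, zero_add]

noncomputable def U (N : ℕ) (a : Fin k × Bool) : (A k N)ˣ where
  val := pi k N (1 + X a)
  inv := pi k N (1 + X a)
  val_inv := by rw [← map_mul, one_add_sq, map_add, pi_X_sq, add_zero, map_one]
  inv_val := by rw [← map_mul, one_add_sq, map_add, pi_X_sq, add_zero, map_one]

noncomputable def J (k i : ℕ) : AddSubgroup (R k) where
  carrier := {f | ∀ w : FreeMonoid (Fin k × Bool), w.length < i → f.coeff w = 0}
  add_mem' {f g} hf hg := fun w hw => by rw [MonoidAlgebra.coeff_add, Finsupp.add_apply, hf w hw, hg w hw, add_zero]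
  zero_mem' := fun w _ => rfl
  neg_mem' {f} hf := fun w hw => by rw [MonoidAlgebra.coeff_neg, Finsupp.neg_apply, hf w hw, neg_zero]

lemma J_mono {i j : ℕ} (h : i ≤ j) : J k j ≤ J k i := by
  intro f hf w hw
  exact hf w (lt_of_lt_of_le hw h)

lemma mem_J_zero (f : R k) : f ∈ J k 0 := fun w hw => absurd hw (Nat.not_lt_zero _)

lemma J_mul {a b : ℕ} {f g : R k} (hf : f ∈ J k a) (hg : g ∈ J k b) :
    f * g ∈ J k (a + b) := by
  classical
  intro w hw
  by_contra h
  have hw' : w ∈ (f * g).coeff.support := Finsupp.mem_support_iff.2 h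
  obtain ⟨u, hu, v, hv, rfl⟩ := Finset.mem_mul.1 (MonoidAlgebra.support_coeff_mul_subset f g hw')
  rw [FreeMonoid.length_mul] at hw
  rcases Nat.lt_or_ge u.length a with h1 | h1
  · exact absurd (hf u h1) (Finsupp.mem_support_iff.1 hu)
  · have h2 : v.length < b := by omega
    exact absurd (hg v h2) (Finsupp.mem_support_iff.1 hv)

lemma X_mem_J (a : Fin k × Bool) : X a ∈ J k 1 := by
  intro w hw
  have hne : FreeMonoid.of a ≠ w := by
    rintro rfl
    simp [FreeMonoid.length_of] at hw
  exact Finsupp.single_eq_of_ne' hne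

lemma J_pow {j : ℕ} {f : R k} (hf : f ∈ J k j) : ∀ n : ℕ, f ^ (n + 1) ∈ J k ((n + 1) * j)
  | 0 => by simpa using hf
  | (n + 1) => by
      have := J_mul (J_pow hf n) hf
      rw [← pow_succ] at this
      convert this using 2
      ring

lemma J_pow_le {j : ℕ} {f : R k} (hf : f ∈ J k j) (n : ℕ) :
    f ^ (n + 1) ∈ J k j :=
  J_mono (Nat.le_mul_of_pos_left j (Nat.succ_pos n)) (J_pow hf n)

lemma pi_eq_zero_of_J (N : ℕ) {f : R k} (hf : f ∈ J k N) : pi k N f = 0 := by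
  show ((f : R k) : A k N) = ((0 : R k) : A k N)
  rw [RingCon.eq]
  intro w hw
  exact hf w hw.1


lemma A_zero_eq (x y : A k 0) : x = y := by
  obtain ⟨r, rfl⟩ := pi_surjective k 0 x
  obtain ⟨s, rfl⟩ := pi_surjective k 0 y
  show ((r : R k) : A k 0) = ((s : R k) : A k 0)
  rw [RingCon.eq]
  intro w hw
  exact absurd hw.1 (Nat.not_lt_zero _)

noncomputable def Phi (k N : ℕ) : FreeGroup (Fin k) →* (A k N)ˣ :=
  FreeGroup.lift fun i => U N (i, false) * U N (i, true)

lemma comm_calc {S : Type*} [Ring S] (a b c d e : S) (hac : a * c = 1) (hbd : b * d = 1)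
    (hswap : b * c = c * b + e) : a * b * c * d = 1 + a * (e * d) := by
  have h1 : a * b * c * d = a * (b * c) * d := by noncomm_ring
  rw [h1, hswap]
  have h2 : a * (c * b + e) * d = a * c * (b * d) + a * (e * d) := by noncomm_ring
  rw [h2, hac, hbd, mul_one]

noncomputable def D (k N j : ℕ) : Subgroup (FreeGroup (Fin k)) where
  carrier := {g | ∃ f ∈ J k j, (Phi k N g : A k N) = pi k N (1 + f)}
  one_mem' := ⟨0, (J k j).zero_mem, by rw [map_one, Units.val_one, add_zero, map_one]⟩
  mul_mem' := by
    rintro g h ⟨f, hf, e⟩ ⟨f', hf', e'⟩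
    refine ⟨f + f' + f * f', ?_, ?_⟩
    · exact (J k j).add_mem ((J k j).add_mem hf hf') (J_mono (Nat.le_add_right j j) (J_mul hf hf'))
    · rw [map_mul, Units.val_mul, e, e', ← map_mul]
      congr 1
      noncomm_ring
  inv_mem' := by
    rintro g ⟨f, hf, e⟩
    rcases Nat.eq_zero_or_pos N with rfl | hN
    · exact ⟨0, (J k j).zero_mem, A_zero_eq _ _⟩
    rcases Nat.eq_zero_or_pos j with rfl | hj
    · obtain ⟨r, hr⟩ := pi_surjective k N (Phi k N g⁻¹ : A k N)
      refine ⟨r - 1, mem_J_zero _, ?_⟩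
      rw [← hr]
      congr 1
      abel
    -- j ≥ 1 : geometric series inverse
    · obtain ⟨M, rfl⟩ : ∃ M, N = M + 1 := ⟨N - 1, by omega⟩
      have h1 : (1 : R k) + f = f - 1 := by
        rw [sub_eq_add_neg, neg_eq', add_comm]
      have hfN : f ^ (M + 1) ∈ J k (M + 1) := by
        refine J_mono ?_ (J_pow hf M)
        exact Nat.le_mul_of_pos_right (M + 1) hj
      have key1 : (∑ t ∈ Finset.range (M + 1), f ^ t) * (1 + f) = 1 + f ^ (M + 1) := by
        rw [h1, geom_sum_mul, sub_eq_add_neg, neg_eq', add_comm]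
      have key2 : (1 + f) * (∑ t ∈ Finset.range (M + 1), f ^ t) = 1 + f ^ (M + 1) := by
        rw [h1, mul_geom_sum, sub_eq_add_neg, neg_eq', add_comm]
      have hpifN : pi k (M + 1) (f ^ (M + 1)) = 0 := pi_eq_zero_of_J (M + 1) hfN
      have hinv2 : (Phi k (M + 1) g : A k (M + 1)) * pi k (M + 1) (∑ t ∈ Finset.range (M + 1), f ^ t) = 1 := by
        rw [e, ← map_mul, key2, map_add, map_one, hpifN, add_zero]
      have hval : (Phi k (M + 1) g⁻¹ : A k (M + 1)) = pi k (M + 1) (∑ t ∈ Finset.range (M + 1), f ^ t) := by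
        rw [map_inv]
        exact Units.inv_eq_of_mul_eq_one_right hinv2
      refine ⟨∑ t ∈ Finset.range M, f ^ (t + 1), ?_, ?_⟩
      · exact AddSubgroup.sum_mem _ fun t _ => J_pow_le hf t
      · rw [hval, Finset.sum_range_succ']
        congr 1
        rw [pow_zero, add_comm]

lemma D_antitone {i j : ℕ} (h : i ≤ j) : D k N j ≤ D k N i := by
  rintro g ⟨f, hf, e⟩
  exact ⟨f, J_mono h hf, e⟩

lemma mem_D_one (N : ℕ) (g : FreeGroup (Fin k)) : g ∈ D k N 1 := by
  induction g using FreeGroup.induction_on with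
  | C1 => exact (D k N 1).one_mem
  | of i =>
      refine ⟨X (i, false) + X (i, true) + X (i, false) * X (i, true), ?_, ?_⟩
      · exact (J k 1).add_mem ((J k 1).add_mem (X_mem_J _) (X_mem_J _))
          (J_mono (by omega) (J_mul (X_mem_J _) (X_mem_J _)))
      · have hpure : (pure i : FreeGroup (Fin k)) = FreeGroup.of i := rfl
        rw [Phi, FreeGroup.lift_apply_of, Units.val_mul]
        show pi k N (1 + X (i, false)) * pi k N (1 + X (i, true)) = _
        rw [← map_mul]
        congr 1
        noncomm_ring
  | inv_of i h => exact (D k N 1).inv_mem h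
  | mul g h hg hh => exact (D k N 1).mul_mem hg hh

lemma sq_mem_D {j : ℕ} (hj : 1 ≤ j) {g : FreeGroup (Fin k)} (hg : g ∈ D k N j) :
    g ^ 2 ∈ D k N (j + 1) := by
  obtain ⟨f, hf, e⟩ := hg
  refine ⟨f * f, J_mono (by omega) (J_mul hf hf), ?_⟩
  rw [map_pow, Units.val_pow_eq_pow_val, e, pow_two, ← map_mul, one_add_sq]

lemma comm_mem_D {j : ℕ} (hj : 1 ≤ j) {g h : FreeGroup (Fin k)} (hg : g ∈ D k N j)
    (hh : h ∈ D k N j) : ⁅g, h⁆ ∈ D k N (j + 1) := by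
  obtain ⟨f, hf, e⟩ := hg
  obtain ⟨f', hf', e'⟩ := hh
  obtain ⟨p, hp, ep⟩ := (D k N j).inv_mem (⟨f, hf, e⟩ : g ∈ D k N j)
  obtain ⟨q, hq, eq'⟩ := (D k N j).inv_mem (⟨f', hf', e'⟩ : h ∈ D k N j)
  have hd₂J : f' * p - p * f' ∈ J k (j + j) :=
    (J k (j + j)).sub_mem (J_mul hf' hp) (J_mul hp hf')
  have hEJ : (1 + f) * ((f' * p - p * f') * (1 + q)) ∈ J k (j + 1) := by
    have h2 := J_mul (mem_J_zero (1 + f)) (J_mul hd₂J (mem_J_zero (1 + q)))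
    have h3 : (0 : ℕ) + (j + j + 0) = j + j := by omega
    rw [h3] at h2
    exact J_mono (by omega) h2
  refine ⟨(1 + f) * ((f' * p - p * f') * (1 + q)), hEJ, ?_⟩
  have hval : (Phi k N ⁅g, h⁆ : A k N)
      = pi k N (1 + f) * pi k N (1 + f') * pi k N (1 + p) * pi k N (1 + q) := by
    rw [commutatorElement_def, map_mul, map_mul, map_mul,
      Units.val_mul, Units.val_mul, Units.val_mul, ep, eq', e, e']
  have hac : pi k N (1 + f) * pi k N (1 + p) = 1 := by
    rw [← ep, ← e, ← Units.val_mul, ← map_mul, mul_inv_cancel, map_one, Units.val_one]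
  have hbd : pi k N (1 + f') * pi k N (1 + q) = 1 := by
    rw [← eq', ← e', ← Units.val_mul, ← map_mul, mul_inv_cancel, map_one, Units.val_one]
  have hswap : pi k N (1 + f') * pi k N (1 + p)
      = pi k N (1 + p) * pi k N (1 + f') + pi k N (f' * p - p * f') := by
    rw [← map_mul, ← map_mul, ← map_add]
    congr 1
    noncomm_ring
  rw [hval, comm_calc _ _ _ _ _ hac hbd hswap, ← map_mul, ← map_mul, ← map_one (pi k N),
    ← map_add]


lemma P_support : ∀ (c : List (Fin k × Bool)),
    ∀ w ∈ ((c.map fun a => (1 : R k) + X a).prod).coeff.support, w.length ≤ c.length := by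
  classical
  intro c
  induction c with
  | nil =>
      intro w hw
      simp only [List.map_nil, List.prod_nil] at hw
      rw [MonoidAlgebra.one_def] at hw
      have := Finsupp.support_single_subset hw
      simp only [Finset.mem_singleton] at this
      subst this
      simp [FreeMonoid.length]
  | cons a c ih =>
      intro w hw
      rw [List.map_cons, List.prod_cons] at hw
      obtain ⟨u, hu, v, hv, rfl⟩ := Finset.mem_mul.1 (MonoidAlgebra.support_coeff_mul_subset _ _ hw)
      have hu' : u.length ≤ 1 := by
        rw [MonoidAlgebra.coeff_add] at hu
        have := Finsupp.support_add hu
        rcases Finset.mem_union.1 this with h | h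
        · rw [MonoidAlgebra.one_def] at h
          have := Finsupp.support_single_subset h
          simp only [Finset.mem_singleton] at this
          subst this
          exact Nat.zero_le 1
        · have := Finsupp.support_single_subset h
          simp only [Finset.mem_singleton] at this
          subst this
          exact le_refl 1
      have hv' := ih v hv
      rw [FreeMonoid.length_mul, List.length_cons]
      omega

lemma P_coeff : ∀ (c : List (Fin k × Bool)),
    ((c.map fun a => (1 : R k) + X a).prod).coeff (FreeMonoid.ofList c) = 1 := by
  intro c
  induction c with
  | nil =>
      rw [List.map_nil, List.prod_nil, MonoidAlgebra.one_def]
      exact Finsupp.single_eq_same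
  | cons a c ih =>
      rw [List.map_cons, List.prod_cons, add_mul, one_mul, MonoidAlgebra.coeff_add, Finsupp.add_apply]
      have h1 : ((c.map fun a => (1 : R k) + X a).prod).coeff (FreeMonoid.ofList (a :: c)) = 0 := by
        rw [← Finsupp.notMem_support_iff]
        intro hmem
        have := P_support c _ hmem
        rw [show (FreeMonoid.ofList (a :: c)).length = c.length + 1 from rfl] at this
        omega
      have H : ∀ u : FreeMonoid (Fin k × Bool),
          FreeMonoid.of a * u = FreeMonoid.ofList (a :: c) ↔ u = FreeMonoid.ofList c := by
        intro u
        constructor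
        · intro h
          have := congrArg FreeMonoid.toList h
          rw [FreeMonoid.toList_mul, FreeMonoid.toList_of] at this
          simp at this
          exact congrArg FreeMonoid.ofList this
        · rintro rfl
          rfl
      have h2 : ((X a : R k) * (c.map fun a => (1 : R k) + X a).prod).coeff
          (FreeMonoid.ofList (a :: c)) = 1 := by
        rw [X, MonoidAlgebra.coeff_single_mul_eq_mul_coeff _ (fun u _ => H u), one_mul, ih]
      rw [h1, h2, zero_add]

/-- adjacent letters of a maximally reduced word never cancel -/
lemma chain'_reduce (L : List (Fin k × Bool)) :
    (FreeGroup.reduce L).IsChain (fun p q => ¬(p.1 = q.1 ∧ p.2 = !q.2)) := by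
  classical
  induction L with
  | nil => simp
  | cons x L ih =>
      rw [FreeGroup.reduce.cons]
      rcases h : FreeGroup.reduce L with _ | ⟨hd, tl⟩
      · simp
      · rw [h] at ih
        dsimp only
        split_ifs with hcond
        · exact ih.tail
        · exact List.isChain_cons_cons.2 ⟨hcond, ih⟩

lemma chain'_flat {L : List (Fin k × Bool)}
    (hL : L.IsChain (fun p q => ¬(p.1 = q.1 ∧ p.2 = !q.2))) :
    (L.flatMap fun x => [(x.1, !x.2), (x.1, x.2)]).IsChain (· ≠ ·) := by
  induction L with
  | nil => simp
  | cons x L ih =>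
      have hpair : ((x.1, !x.2) : Fin k × Bool) ≠ (x.1, x.2) := by
        simp [Prod.ext_iff]
      rcases L with _ | ⟨y, L'⟩
      · simp [List.isChain_cons_cons, hpair]
      · have hxy : ¬(x.1 = y.1 ∧ x.2 = !y.2) := (List.isChain_cons_cons.1 hL).1
        have htail := ih (List.isChain_cons_cons.1 hL).2
        rw [List.flatMap_cons]
        show List.IsChain (· ≠ ·)
          ((x.1, !x.2) :: (x.1, x.2) :: ((y :: L').flatMap fun x => [(x.1, !x.2), (x.1, x.2)]))
        rw [List.flatMap_cons]
        show List.IsChain (· ≠ ·)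
          ((x.1, !x.2) :: (x.1, x.2) :: (y.1, !y.2) :: (y.1, y.2) ::
            (L'.flatMap fun x => [(x.1, !x.2), (x.1, x.2)]))
        rw [List.isChain_cons_cons, List.isChain_cons_cons]
        refine ⟨hpair, ?_, ?_⟩
        · intro hcontra
          rw [Prod.ext_iff] at hcontra
          obtain ⟨h1, h2⟩ := hcontra
          exact hxy ⟨h1, by simpa using h2⟩
        · have := htail
          rw [List.flatMap_cons] at this
          exact this

lemma flat_length (L : List (Fin k × Bool)) :
    (L.flatMap fun x => [(x.1, !x.2), (x.1, x.2)]).length = 2 * L.length := by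
  induction L with
  | nil => simp
  | cons x L ih => rw [List.flatMap_cons, List.length_append, List.length_cons, ih]; simp; omega

lemma val_letters (N : ℕ) : ∀ L : List (Fin k × Bool),
    (((L.map fun x => cond x.2 (U N (x.1, false) * U N (x.1, true))
        (U N (x.1, false) * U N (x.1, true))⁻¹).prod : (A k N)ˣ) : A k N)
      = pi k N (((L.flatMap fun x => [(x.1, !x.2), (x.1, x.2)]).map
          fun a => (1 : R k) + X a).prod) := by
  intro L
  induction L with
  | nil => simp
  | cons x L ih =>
      rw [List.map_cons, List.prod_cons, Units.val_mul, ih, List.flatMap_cons]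
      rcases x with ⟨i, b⟩
      cases b
      · show ((U N (i, false) * U N (i, true))⁻¹ : (A k N)ˣ).val * _ = _
        rw [mul_inv_rev, Units.val_mul]
        show pi k N (1 + X (i, true)) * pi k N (1 + X (i, false)) * _ = _
        rw [List.map_append, List.prod_append, ← map_mul, ← map_mul]
        congr 1
        simp [List.prod_cons, List.prod_nil, mul_assoc]
      · show ((U N (i, false) * U N (i, true)) : (A k N)ˣ).val * _ = _
        rw [Units.val_mul]
        show pi k N (1 + X (i, false)) * pi k N (1 + X (i, true)) * _ = _
        rw [List.map_append, List.prod_append, ← map_mul, ← map_mul]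
        congr 1
        simp [List.prod_cons, List.prod_nil, mul_assoc]


theorem iInf_bot (k : ℕ) (T : ℕ → Subgroup (FreeGroup (Fin k)))
    (hTsucc : ∀ i, T (i + 1) = Subgroup.closure
      ({x : FreeGroup (Fin k) | ∃ y ∈ T i, x = y ^ 2} ∪
        {x : FreeGroup (Fin k) | ∃ y ∈ T i, ∃ z ∈ T i, x = ⁅y, z⁆})) :
    (⨅ i, T i) = ⊥ := by
  rw [eq_bot_iff]
  intro w hw
  rw [Subgroup.mem_bot]
  by_contra hne
  have hL : w.toWord ≠ [] := fun h => hne (FreeGroup.toWord_eq_nil_iff.1 h)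
  set m := w.toWord.length with hm
  have hm1 : 1 ≤ m := by
    rw [hm]
    exact List.length_pos_iff.2 hL
  set N := 2 * m + 1 with hNdef
  have TD : ∀ i, T (i + 1) ≤ D k N (i + 1) := by
    intro i
    induction i with
    | zero => exact fun g _ => mem_D_one N g
    | succ i ih =>
        rw [hTsucc (i + 1), Subgroup.closure_le]
        rintro x (⟨y, hy, rfl⟩ | ⟨y, hy, z, hz, rfl⟩)
        · exact sq_mem_D (Nat.succ_le_succ (Nat.zero_le i)) (ih hy)
        · exact comm_mem_D (Nat.succ_le_succ (Nat.zero_le i)) (ih hy) (ih hz)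
  have hwT : w ∈ T N := (Subgroup.mem_iInf.1 hw) N
  have hwD : w ∈ D k N N := TD (2 * m) hwT
  obtain ⟨f, hf, e⟩ := hwD
  have hval1 : (Phi k N w : A k N) = 1 := by
    rw [e, map_add, map_one, pi_eq_zero_of_J N hf, add_zero]
  have hval2 : (Phi k N w : A k N)
      = pi k N (((w.toWord.flatMap fun x => [(x.1, !x.2), (x.1, x.2)]).map
          fun a => (1 : R k) + X a).prod) := by
    have h1 : Phi k N w = (FreeGroup.lift fun i => U N (i, false) * U N (i, true))
        (FreeGroup.mk w.toWord) := by
      rw [FreeGroup.mk_toWord]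
      rfl
    rw [h1, FreeGroup.lift_mk]
    exact val_letters N w.toWord
  set c : List (Fin k × Bool) := w.toWord.flatMap fun x => [(x.1, !x.2), (x.1, x.2)] with hc
  have hrel : ∀ u, Good N u →
      (((c.map fun a => (1 : R k) + X a).prod)).coeff u = (1 : R k).coeff u := by
    have h2 : pi k N ((c.map fun a => (1 : R k) + X a).prod) = pi k N 1 := by
      rw [map_one, ← hval2, hval1]
    exact (RingCon.eq _).1 h2
  have hgood : Good N (FreeMonoid.ofList c) := by
    constructor
    · show c.length < N
      rw [hc, flat_length]
      omega
    · show c.IsChain (· ≠ ·)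
      rw [hc]
      refine chain'_flat ?_
      have := chain'_reduce (k := k) w.toWord
      rwa [FreeGroup.reduce_toWord] at this
  have hPc := P_coeff c
  have hone : (1 : R k).coeff (FreeMonoid.ofList c) = 0 := by
    rw [MonoidAlgebra.one_def]
    refine Finsupp.single_eq_of_ne' ?_
    intro hcontra
    have : ([] : List (Fin k × Bool)) = c := congrArg FreeMonoid.toList hcontra
    have hlen : c.length = 2 * m := by rw [hc, flat_length, hm]
    rw [← this] at hlen
    simp at hlen
    omega
  rw [hrel _ hgood, hone] at hPc
  exact one_ne_zero hPc.symm


theorem finiteIndexAll (k : ℕ) (T : ℕ → Subgroup (FreeGroup (Fin k)))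
    (hT0 : T 0 = ⊤)
    (hTsucc : ∀ i, T (i + 1) = Subgroup.closure
      ({x : FreeGroup (Fin k) | ∃ y ∈ T i, x = y ^ 2} ∪
        {x : FreeGroup (Fin k) | ∃ y ∈ T i, ∃ z ∈ T i, x = ⁅y, z⁆})) :
    ∀ i, (T i).FiniteIndex := by
  haveI : Group.FG (FreeGroup (Fin k)) := by
    rw [Group.fg_iff]
    exact ⟨Set.range FreeGroup.of, FreeGroup.closure_range_of _, Set.finite_range _⟩
  intro i
  induction i with
  | zero =>
      rw [hT0]
      exact ⟨by rw [Subgroup.index_top]; exact one_ne_zero⟩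
  | succ i ih =>
      haveI := ih
      have hle : T (i + 1) ≤ T i := by
        rw [hTsucc i, Subgroup.closure_le]
        rintro x (⟨y, hy, rfl⟩ | ⟨y, hy, z, hz, rfl⟩)
        · exact pow_mem hy 2
        · rw [commutatorElement_def]
          exact mul_mem (mul_mem (mul_mem hy hz) (inv_mem hy)) (inv_mem hz)
      have hconj : ∀ t ∈ T i, ∀ n ∈ T (i + 1), t * n * t⁻¹ ∈ T (i + 1) := by
        intro t ht n hn
        have hmap : Subgroup.map (MulAut.conj t).toMonoidHom (T (i + 1)) ≤ T (i + 1) := by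
          rw [hTsucc i, MonoidHom.map_closure]
          refine Subgroup.closure_mono ?_
          rintro x ⟨y, (⟨u, hu, rfl⟩ | ⟨u, hu, v, hv, rfl⟩), rfl⟩
          · exact Or.inl ⟨(MulAut.conj t).toMonoidHom u,
              by rw [MulEquiv.coe_toMonoidHom, MulAut.conj_apply];
                 exact mul_mem (mul_mem ht hu) (inv_mem ht),
              map_pow _ _ _⟩
          · exact Or.inr ⟨(MulAut.conj t).toMonoidHom u,
              by rw [MulEquiv.coe_toMonoidHom, MulAut.conj_apply];
                 exact mul_mem (mul_mem ht hu) (inv_mem ht),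
              (MulAut.conj t).toMonoidHom v,
              by rw [MulEquiv.coe_toMonoidHom, MulAut.conj_apply];
                 exact mul_mem (mul_mem ht hv) (inv_mem ht),
              map_commutatorElement _ _ _⟩
        have := hmap ⟨n, hn, rfl⟩
        rwa [MulEquiv.coe_toMonoidHom, MulAut.conj_apply] at this
      set H : Subgroup (T i) := (T (i + 1)).subgroupOf (T i) with hH
      haveI hnorm : H.Normal := by
        constructor
        intro n hn g
        rw [hH, Subgroup.mem_subgroupOf] at hn ⊢
        have hcoe : ((g * n * g⁻¹ : T i) : FreeGroup (Fin k))
            = (g : FreeGroup (Fin k)) * n * (g : FreeGroup (Fin k))⁻¹ := rfl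
        rw [hcoe]
        exact hconj _ g.2 _ hn
      haveI : Finite ((T i) ⧸ H) := by
        have hc : ∀ a b : (T i) ⧸ H, a * b = b * a := by
          intro a b
          refine QuotientGroup.induction_on a fun y => QuotientGroup.induction_on b fun z => ?_
          have hcm : ⁅(y : T i), z⁆ ∈ H := by
            rw [hH, Subgroup.mem_subgroupOf]
            have hcoe : ((⁅y, z⁆ : T i) : FreeGroup (Fin k))
                = ⁅(y : FreeGroup (Fin k)), (z : FreeGroup (Fin k))⁆ := rfl
            rw [hcoe, hTsucc i]
            exact Subgroup.subset_closure (Or.inr ⟨y, y.2, z, z.2, rfl⟩)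
          have h1 : (QuotientGroup.mk' H) ⁅y, z⁆ = 1 := (QuotientGroup.eq_one_iff _).mpr hcm
          rw [map_commutatorElement] at h1
          exact (commutatorElement_eq_one_iff_commute.1 h1).eq
        have h2 : ∀ a : (T i) ⧸ H, a ^ 2 = 1 := by
          intro a
          refine QuotientGroup.induction_on a fun y => ?_
          have hsq : (y : T i) ^ 2 ∈ H := by
            rw [hH, Subgroup.mem_subgroupOf]
            have hcoe : (((y : T i) ^ 2 : T i) : FreeGroup (Fin k))
                = (y : FreeGroup (Fin k)) ^ 2 := rfl
            rw [hcoe, hTsucc i]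
            exact Subgroup.subset_closure (Or.inl ⟨y, y.2, rfl⟩)
          have h1 : (QuotientGroup.mk' H) ((y : T i) ^ 2) = 1 :=
            (QuotientGroup.eq_one_iff _).mpr hsq
          rw [map_pow] at h1
          exact h1
        letI cg : CommGroup ((T i) ⧸ H) :=
          { (inferInstance : Group ((T i) ⧸ H)) with mul_comm := hc }
        have ht : Monoid.IsTorsion ((T i) ⧸ H) := fun a =>
          isOfFinOrder_iff_pow_eq_one.2 ⟨2, two_pos, h2 a⟩
        exact CommGroup.finite_of_fg_torsion _ ht
      have hidx : H.index ≠ 0 := Subgroup.index_ne_zero_of_finite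
      have hrel : (T (i + 1)).relIndex (T i) * (T i).index = (T (i + 1)).index :=
        Subgroup.relIndex_mul_index hle
      refine ⟨?_⟩
      rw [← hrel]
      exact mul_ne_zero hidx ih.index_ne_zero

end FrattiniAux

/-- The 2-Frattini series of the free group of finite rank: every term has finite index,
and the intersection of the series is trivial (the free group is residually a finite
2-group). -/
theorem frattiniSeries_finiteIndex_and_iInf_eq_bot (k : ℕ) (hk : 0 < k)
    (T : ℕ → Subgroup (FreeGroup (Fin k)))
    (hT0 : T 0 = ⊤)
    (hTsucc : ∀ i, T (i + 1) = Subgroup.closure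
      ({x : FreeGroup (Fin k) | ∃ y ∈ T i, x = y ^ 2} ∪
        {x : FreeGroup (Fin k) | ∃ y ∈ T i, ∃ z ∈ T i, x = ⁅y, z⁆})) :
    (∀ i, (T i).FiniteIndex) ∧ (⨅ i, T i) = ⊥ :=
  ⟨FrattiniAux.finiteIndexAll k T hT0 hTsucc, FrattiniAux.iInf_bot k T hTsucc⟩
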